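/- Let M be a compact metric space, M_f(M) the compact convex set of f-invariant measures for a homeomorphism f, h : M_f(M) → [0,∞) affine, bounded, upper semicontinuous, P(φ) = sup{h(μ)+∫φdμ}, and t_φ the set of tangent functionals to P at φ. Suppose t_φ = {μ_φ} and for every ψ and every μ ∈ t_{φ+ψ} one has ‖μ - μ_φ‖ → 0 as ‖ψ‖ → 0 (in the total variation norm). Then P is Fréchet differentiable at φ with derivative ψ ↦ ∫ψ dμ_φ. -/
import Mathlib


open MeasureTheory Filter Topology

set_option maxHeartbeats 1000000 in
/-- Implication (7) ⇒ (1) of Theorem G in abstract form: if the tangent functionals to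
the pressure-like function `P` at `φ` form the singleton `{γ_φ}`, where `γ_φ` is given
by integration against an invariant probability measure `μ_φ`, and the tangent
functionals at `φ + ψ` converge in norm to `γ_φ` as `‖ψ‖ → 0`, then `P` is Fréchet
differentiable at `φ` with derivative `ψ ↦ ∫ ψ dμ_φ`. -/
theorem stmt_15 {M : Type*} [MetricSpace M] [CompactSpace M]
    [MeasurableSpace M] [BorelSpace M]
    (f : M ≃ₜ M)
    (Minv : Set (ProbabilityMeasure M))
    (hMinv : Minv = {ν : ProbabilityMeasure M |
      Measure.map f ν.toMeasure = ν.toMeasure})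
    (h : ProbabilityMeasure M → ℝ)
    (hpos : ∀ ν ∈ Minv, 0 ≤ h ν)
    (hbdd : ∃ C : ℝ, ∀ ν ∈ Minv, h ν ≤ C)
    (haff : ∀ ν₁ ∈ Minv, ∀ ν₂ ∈ Minv, ∀ ρ ∈ Minv, ∀ a b : ℝ, 0 ≤ a → 0 ≤ b →
      a + b = 1 →
      ρ.toMeasure = ENNReal.ofReal a • ν₁.toMeasure + ENNReal.ofReal b • ν₂.toMeasure →
      h ρ = a * h ν₁ + b * h ν₂)
    (husc : UpperSemicontinuousOn h Minv)
    (P : C(M, ℝ) → ℝ)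
    (hP : ∀ χ : C(M, ℝ),
      IsLUB {x : ℝ | ∃ ν ∈ Minv, x = h ν + ∫ y, χ y ∂(ν : Measure M)} (P χ))
    (T : C(M, ℝ) → Set (C(M, ℝ) →L[ℝ] ℝ))
    (hT : ∀ χ : C(M, ℝ), T χ = {γ | ∀ ψ : C(M, ℝ), γ ψ ≤ P (χ + ψ) - P χ})
    (φ : C(M, ℝ)) (μφ : ProbabilityMeasure M) (hμφ : μφ ∈ Minv)
    (γφ : C(M, ℝ) →L[ℝ] ℝ)
    (hγφ : ∀ ψ : C(M, ℝ), γφ ψ = ∫ y, ψ y ∂(μφ : Measure M))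
    (hsingle : T φ = {γφ})
    (hclose : ∀ ε > (0 : ℝ), ∃ δ > (0 : ℝ), ∀ ψ : C(M, ℝ), ‖ψ‖ < δ →
      ∀ γ ∈ T (φ + ψ), ‖γ - γφ‖ < ε) :
    HasFDerivAt P γφ φ := by
  classical
  -- integrability of continuous maps
  have hint : ∀ (ν : ProbabilityMeasure M) (χ : C(M, ℝ)),
      Integrable (fun y => χ y) (ν : Measure M) := fun ν χ =>
    χ.continuous.integrable_of_hasCompactSupport (HasCompactSupport.of_compactSpace _)
  -- every element of the defining set is ≤ P χ
  have hle : ∀ χ : C(M, ℝ), ∀ ν ∈ Minv,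
      h ν + ∫ y, χ y ∂(ν : Measure M) ≤ P χ := by
    intro χ ν hν
    exact (hP χ).1 ⟨ν, hν, rfl⟩
  -- integral bound
  have hIb : ∀ (ν : ProbabilityMeasure M) (χ : C(M, ℝ)),
      |∫ y, χ y ∂(ν : Measure M)| ≤ ‖χ‖ := by
    intro ν χ
    have := norm_integral_le_of_norm_le_const
      (μ := (ν : Measure M)) (f := fun y => χ y) (C := ‖χ‖)
      (Filter.Eventually.of_forall fun y => χ.norm_coe_le_norm y)
    simpa using this
  -- P is 1-Lipschitz
  have hLip : LipschitzWith 1 P := by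
    have key : ∀ χ₁ χ₂ : C(M, ℝ), P χ₁ ≤ P χ₂ + ‖χ₁ - χ₂‖ := by
      intro χ₁ χ₂
      refine (hP χ₁).2 ?_
      rintro x ⟨ν, hν, rfl⟩
      have h1 : ∫ y, χ₁ y ∂(ν : Measure M)
          = (∫ y, χ₂ y ∂(ν : Measure M)) + ∫ y, (χ₁ - χ₂) y ∂(ν : Measure M) := by
        rw [← integral_add (hint ν χ₂) (hint ν (χ₁ - χ₂))]
        refine integral_congr_ae (Filter.Eventually.of_forall fun y => ?_)
        simp
      have h2 : ∫ y, (χ₁ - χ₂) y ∂(ν : Measure M) ≤ ‖χ₁ - χ₂‖ :=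
        (abs_le.1 (hIb ν (χ₁ - χ₂))).2
      calc h ν + ∫ y, χ₁ y ∂(ν : Measure M)
          = (h ν + ∫ y, χ₂ y ∂(ν : Measure M)) + ∫ y, (χ₁ - χ₂) y ∂(ν : Measure M) := by
            rw [h1]; ring
        _ ≤ P χ₂ + ‖χ₁ - χ₂‖ := add_le_add (hle χ₂ ν hν) h2
    refine LipschitzWith.of_dist_le_mul fun χ₁ χ₂ => ?_
    rw [Real.dist_eq, NNReal.coe_one, one_mul, dist_eq_norm]
    rw [abs_le]
    constructor
    · have := key χ₂ χ₁
      rw [← norm_neg (χ₂ - χ₁)] at this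
      simp only [neg_sub] at this
      linarith
    · linarith [key χ₁ χ₂]
  have hPcont : Continuous P := hLip.continuous
  -- convexity inequality for P
  have hconv : ∀ (χ₁ χ₂ : C(M, ℝ)) (a b : ℝ), 0 ≤ a → 0 ≤ b → a + b = 1 →
      P (a • χ₁ + b • χ₂) ≤ a * P χ₁ + b * P χ₂ := by
    intro χ₁ χ₂ a b ha hb hab
    refine (hP _).2 ?_
    rintro x ⟨ν, hν, rfl⟩
    have h1 : ∫ y, (a • χ₁ + b • χ₂) y ∂(ν : Measure M)
        = a * ∫ y, χ₁ y ∂(ν : Measure M) + b * ∫ y, χ₂ y ∂(ν : Measure M) := by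
      have e0 : ∫ y, (a • χ₁ + b • χ₂) y ∂(ν : Measure M)
          = ∫ y, (a * χ₁ y + b * χ₂ y) ∂(ν : Measure M) :=
        integral_congr_ae (Filter.Eventually.of_forall fun y => by simp)
      rw [e0, integral_add ((hint ν χ₁).const_mul a) ((hint ν χ₂).const_mul b),
        MeasureTheory.integral_const_mul, MeasureTheory.integral_const_mul]
    have hhν : h ν = a * h ν + b * h ν := by rw [← add_mul, hab, one_mul]
    calc h ν + ∫ y, (a • χ₁ + b • χ₂) y ∂(ν : Measure M)
        = a * (h ν + ∫ y, χ₁ y ∂(ν : Measure M))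
          + b * (h ν + ∫ y, χ₂ y ∂(ν : Measure M)) := by
          rw [h1]; nlinarith [hhν]
      _ ≤ a * P χ₁ + b * P χ₂ :=
          add_le_add (mul_le_mul_of_nonneg_left (hle χ₁ ν hν) ha)
            (mul_le_mul_of_nonneg_left (hle χ₂ ν hν) hb)
  -- existence of tangent functionals everywhere
  have hexists : ∀ χ₀ : C(M, ℝ), ∃ γ, γ ∈ T χ₀ := by
    intro χ₀
    -- open epigraph
    set s : Set (C(M, ℝ) × ℝ) := {p | P p.1 < p.2} with hs
    have hsopen : IsOpen s := by
      have : Continuous fun p : C(M, ℝ) × ℝ => p.2 - P p.1 :=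
        continuous_snd.sub (hPcont.comp continuous_fst)
      have : IsOpen {p : C(M, ℝ) × ℝ | 0 < p.2 - P p.1} :=
        isOpen_lt continuous_const this
      convert this using 1
      ext p; simp [hs, sub_pos]
    have hsconv : Convex ℝ s := by
      rintro ⟨χ₁, t₁⟩ h₁ ⟨χ₂, t₂⟩ h₂ a b ha hb hab
      simp only [hs, Set.mem_setOf_eq] at h₁ h₂ ⊢
      have := hconv χ₁ χ₂ a b ha hb hab
      have habpos : 0 < a ∨ 0 < b := by
        rcases lt_or_eq_of_le ha with h | h
        · exact Or.inl h
        · right; rw [← h] at hab; linarith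
      have : a * P χ₁ + b * P χ₂ < a * t₁ + b * t₂ := by
        rcases habpos with h | h
        · rcases lt_or_eq_of_le hb with h' | h'
          · exact add_lt_add (by nlinarith) (by nlinarith)
          · rw [← h']; simp only [zero_mul, add_zero]; nlinarith
        · rcases lt_or_eq_of_le ha with h' | h'
          · exact add_lt_add (by nlinarith) (by nlinarith)
          · rw [← h']; simp only [zero_mul, zero_add]; nlinarith
      calc P (a • χ₁ + b • χ₂) ≤ a * P χ₁ + b * P χ₂ := hconv χ₁ χ₂ a b ha hb hab
        _ < a * t₁ + b * t₂ := this
    have hx : (χ₀, P χ₀) ∉ s := by simp [hs]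
    obtain ⟨F, hF⟩ := geometric_hahn_banach_open_point hsconv hsopen hx
    set g : C(M, ℝ) →L[ℝ] ℝ := F.comp (ContinuousLinearMap.inl ℝ (C(M, ℝ)) ℝ) with hg
    set c : ℝ := F (0, 1) with hc
    have hdecomp : ∀ (χ : C(M, ℝ)) (t : ℝ), F (χ, t) = g χ + t * c := by
      intro χ t
      have : (χ, t) = (χ, (0 : ℝ)) + t • ((0 : C(M, ℝ)), (1 : ℝ)) := by
        simp [Prod.ext_iff]
      rw [this, map_add, F.map_smul]
      simp only [hg, ContinuousLinearMap.comp_apply, ContinuousLinearMap.inl_apply,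
        smul_eq_mul, hc]
    have hFx : F (χ₀, P χ₀) = g χ₀ + P χ₀ * c := hdecomp χ₀ (P χ₀)
    -- c < 0
    have hcneg : c < 0 := by
      rcases lt_trichotomy c 0 with hcc | hcc | hcc
      · exact hcc
      · exfalso
        have hmem : (χ₀, P χ₀ + 1) ∈ s := by simp [hs]
        have hlt := hF _ hmem
        rw [hdecomp χ₀ (P χ₀ + 1), hFx, hcc] at hlt
        simp at hlt
      · exfalso
        set t : ℝ := max (P χ₀ + 1) (P χ₀ + 1 / c) with ht
        have hmem : (χ₀, t) ∈ s := by
          simp only [hs, Set.mem_setOf_eq]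
          calc P χ₀ < P χ₀ + 1 := by linarith
            _ ≤ t := le_max_left _ _
        have hlt := hF _ hmem
        rw [hdecomp χ₀ t, hFx] at hlt
        have h1 : P χ₀ + 1 / c ≤ t := le_max_right _ _
        have h2 : P χ₀ * c + 1 ≤ t * c := by
          have := mul_le_mul_of_nonneg_right h1 hcc.le
          have hc1 : (1 / c) * c = 1 := one_div_mul_cancel (ne_of_gt hcc)
          nlinarith
        linarith
    -- key inequality: ∀ χ, g χ + P χ * c ≤ g χ₀ + P χ₀ * c
    have hkey : ∀ χ : C(M, ℝ), g χ + P χ * c ≤ g χ₀ + P χ₀ * c := by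
      intro χ
      have hstep : ∀ ε > (0 : ℝ), g χ + (P χ + ε) * c < g χ₀ + P χ₀ * c := by
        intro ε hε
        have hmem : (χ, P χ + ε) ∈ s := by simp only [hs, Set.mem_setOf_eq]; linarith
        have hlt := hF _ hmem
        rwa [hdecomp χ (P χ + ε), hFx] at hlt
      by_contra hcon
      push_neg at hcon
      set gap : ℝ := g χ + P χ * c - (g χ₀ + P χ₀ * c) with hgap
      have hgappos : 0 < gap := by simp only [hgap]; linarith
      have hεpos : 0 < gap / (-c) := div_pos hgappos (by linarith)
      have := hstep (gap / (-c)) hεpos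
      have hcancel : (gap / (-c)) * (-c) = gap :=
        div_mul_cancel₀ _ (by linarith : (-c) ≠ 0)
      nlinarith
    refine ⟨(-c)⁻¹ • g, ?_⟩
    rw [hT]
    intro ψ
    simp only [ContinuousLinearMap.smul_apply, smul_eq_mul]
    have := hkey (χ₀ + ψ)
    have hgψ : g (χ₀ + ψ) = g χ₀ + g ψ := by rw [map_add]
    rw [hgψ] at this
    have h2 : g ψ ≤ (P χ₀ - P (χ₀ + ψ)) * c := by nlinarith
    rw [inv_mul_le_iff₀ (by linarith : (0:ℝ) < -c)]
    nlinarith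
  -- γφ ∈ T φ
  have hγφT : γφ ∈ T φ := by rw [hsingle]; exact rfl
  have hγφT' : ∀ ψ : C(M, ℝ), γφ ψ ≤ P (φ + ψ) - P φ := by
    rw [hT] at hγφT; exact hγφT
  -- Fréchet differentiability
  rw [hasFDerivAt_iff_isLittleO_nhds_zero]
  rw [Asymptotics.isLittleO_iff]
  intro ε hε
  obtain ⟨δ, hδ, hδ'⟩ := hclose ε hε
  have : Metric.ball (0 : C(M, ℝ)) δ ∈ 𝓝 (0 : C(M, ℝ)) := Metric.ball_mem_nhds _ hδ
  filter_upwards [this] with ψ hψ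
  rw [Metric.mem_ball, dist_zero_right] at hψ
  obtain ⟨γ, hγ⟩ := hexists (φ + ψ)
  have hγ' : ∀ χ : C(M, ℝ), γ χ ≤ P ((φ + ψ) + χ) - P (φ + ψ) := by
    rw [hT] at hγ; exact hγ
  have hnormγ : ‖γ - γφ‖ < ε := hδ' ψ hψ γ hγ
  have hlow : 0 ≤ P (φ + ψ) - P φ - γφ ψ := by
    have := hγφT' ψ; linarith
  have hup : P (φ + ψ) - P φ - γφ ψ ≤ ε * ‖ψ‖ := by
    have h1 := hγ' (-ψ)
    rw [add_neg_cancel_right] at h1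
    rw [map_neg] at h1
    have h2 : P (φ + ψ) - P φ - γφ ψ ≤ γ ψ - γφ ψ := by linarith
    have h3 : γ ψ - γφ ψ = (γ - γφ) ψ := by simp
    have h4 : (γ - γφ) ψ ≤ ‖γ - γφ‖ * ‖ψ‖ := by
      calc (γ - γφ) ψ ≤ |(γ - γφ) ψ| := le_abs_self _
        _ ≤ ‖γ - γφ‖ * ‖ψ‖ := (γ - γφ).le_opNorm ψ
    have h5 : ‖γ - γφ‖ * ‖ψ‖ ≤ ε * ‖ψ‖ :=
      mul_le_mul_of_nonneg_right hnormγ.le (norm_nonneg _)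
    linarith
  rw [Real.norm_eq_abs, abs_of_nonneg hlow]
  simpa using hup
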